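/- Let G be a bipartite d-regular graph (d ≥ 2) with n vertices on each side and let k < n/2. Then the number M_k(G) of matchings of size k in G satisfies M_k(G) ≥ (end/k)^k · (1/(2e))^{4k²/n} · 1/(2πk). -/

import Mathlib

open Finset

/-- `M` is a matching in `G`: a set of edges of `G` that are pairwise vertex-disjoint. -/
def IsMatchingSet {V : Type*} (G : SimpleGraph V) (M : Finset (Sym2 V)) : Prop :=
  (↑M ⊆ G.edgeSet) ∧ ∀ e ∈ M, ∀ f ∈ M, e ≠ f → ∀ v : V, v ∈ e → v ∉ f

noncomputable def mcount {V : Type*} [Fintype V] (G : SimpleGraph V) (j : ℕ) : ℕ :=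
  Nat.card {M : Finset (Sym2 V) // IsMatchingSet G M ∧ M.card = j}

open Classical in
lemma mcount_eq {V : Type*} [Fintype V] (G : SimpleGraph V) (j : ℕ) :
    mcount G j = (Finset.univ.filter
      (fun M : Finset (Sym2 V) => IsMatchingSet G M ∧ M.card = j)).card := by
  rw [mcount, Nat.card_eq_fintype_card, Fintype.card_subtype]

open Classical in
lemma step_count {V : Type*} [Fintype V] [DecidableEq V] (G : SimpleGraph V)
    [DecidableRel G.Adj] (d j : ℕ) (hreg : G.IsRegularOfDegree d) :
    mcount G j * (G.edgeFinset.card - j * (2 * d - 1)) ≤ (j + 1) * mcount G (j + 1) := by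
  classical
  rw [mcount_eq, mcount_eq]
  set S := Finset.univ.filter
      (fun M : Finset (Sym2 V) => IsMatchingSet G M ∧ M.card = j) with hS
  set T := Finset.univ.filter
      (fun M : Finset (Sym2 V) => IsMatchingSet G M ∧ M.card = j + 1) with hT
  set ext : Finset (Sym2 V) → Finset (Sym2 V) := fun N =>
    G.edgeFinset.filter (fun e => ∀ f ∈ N, ∀ v, v ∈ e → v ∉ f) with hext
  -- basic facts about ext membership
  have hextmem : ∀ N e, e ∈ ext N ↔ e ∈ G.edgeFinset ∧ ∀ f ∈ N, ∀ v, v ∈ e → v ∉ f := by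
    intro N e; simp [hext]
  -- e ∈ ext N → e ∉ N
  have hnotmem : ∀ N e, e ∈ ext N → e ∉ N := by
    intro N e he heN
    rw [hextmem] at he
    obtain ⟨⟨u, w⟩, rfl⟩ := Quot.exists_rep e
    exact he.2 _ heN u (by simp) (by simp)
  -- the double counting identity
  have hkey : ∑ N ∈ S, (ext N).card = ∑ M ∈ T, M.card := by
    rw [← Finset.card_sigma, ← Finset.card_sigma]
    refine Finset.card_bij' (fun p _ => (⟨insert p.2 p.1, p.2⟩ : (_ : Finset (Sym2 V)) × Sym2 V))
      (fun q _ => ⟨q.1.erase q.2, q.2⟩) ?hi ?hj ?left ?right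
    case hi =>
      rintro ⟨N, e⟩ hp
      rw [Finset.mem_sigma] at hp
      obtain ⟨hNS, heN⟩ := hp
      rw [hS, Finset.mem_filter] at hNS
      obtain ⟨-, hNm, hNc⟩ := hNS
      rw [hextmem] at heN
      obtain ⟨heE, hcompat⟩ := heN
      have henot : e ∉ N := hnotmem N e (by rw [hextmem]; exact ⟨heE, hcompat⟩)
      rw [Finset.mem_sigma, hT, Finset.mem_filter]
      refine ⟨⟨Finset.mem_univ _, ⟨?_, ?_⟩, ?_⟩, Finset.mem_insert_self _ _⟩
      · rw [Finset.coe_insert]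
        exact Set.insert_subset (SimpleGraph.mem_edgeFinset.mp heE) hNm.1
      · intro e1 he1 e2 he2 hne v hv1
        rcases Finset.mem_insert.mp he1 with rfl | he1 <;>
          rcases Finset.mem_insert.mp he2 with rfl | he2
        · exact absurd rfl hne
        · exact hcompat e2 he2 v hv1
        · intro hv2; exact hcompat e1 he1 v hv2 hv1
        · exact hNm.2 e1 he1 e2 he2 hne v hv1
      · rw [Finset.card_insert_of_notMem henot, hNc]
    case hj =>
      rintro ⟨M, e⟩ hq
      rw [Finset.mem_sigma] at hq
      obtain ⟨hMT, heM⟩ := hq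
      rw [hT, Finset.mem_filter] at hMT
      obtain ⟨-, hMm, hMc⟩ := hMT
      dsimp only at heM hMm hMc ⊢
      rw [Finset.mem_sigma]
      refine ⟨?_, ?_⟩
      · rw [hS, Finset.mem_filter]
        refine ⟨Finset.mem_univ _, ⟨?_, ?_⟩, ?_⟩
        · intro x hx
          exact hMm.1 (Finset.mem_coe.mpr (Finset.mem_of_mem_erase (Finset.mem_coe.mp hx)))
        · intro e1 he1 e2 he2 hne v hv
          exact hMm.2 e1 (Finset.mem_of_mem_erase he1) e2 (Finset.mem_of_mem_erase he2) hne v hv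
        · rw [Finset.card_erase_of_mem heM, hMc]
          rfl
      · rw [hextmem]
        refine ⟨SimpleGraph.mem_edgeFinset.mpr (hMm.1 heM), ?_⟩
        intro f hf v hv
        exact hMm.2 e heM f (Finset.mem_of_mem_erase hf)
          (fun h => (Finset.ne_of_mem_erase hf) h.symm) v hv
    case left =>
      rintro ⟨N, e⟩ hp
      rw [Finset.mem_sigma] at hp
      have he : e ∉ N := hnotmem N e hp.2
      dsimp only
      rw [Finset.erase_insert he]
    case right =>
      rintro ⟨M, e⟩ hq
      rw [Finset.mem_sigma] at hq
      dsimp only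
      rw [Finset.insert_erase hq.2]
  -- lower bound on ext N
  have hlow : ∀ N ∈ S, G.edgeFinset.card - j * (2 * d - 1) ≤ (ext N).card := by
    intro N hN
    rw [hS, Finset.mem_filter] at hN
    obtain ⟨-, hNm, hNc⟩ := hN
    have hsplit := Finset.card_filter_add_card_filter_not
      (s := G.edgeFinset) (fun e => ∀ f ∈ N, ∀ v, v ∈ e → v ∉ f)
    set bad := G.edgeFinset.filter (fun e => ¬ ∀ f ∈ N, ∀ v, v ∈ e → v ∉ f) with hbad
    have hbadsub : bad ⊆ N.biUnion (fun f =>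
        G.edgeFinset.filter (fun e => ∃ v, v ∈ e ∧ v ∈ f)) := by
      intro e he
      rw [hbad, Finset.mem_filter] at he
      obtain ⟨heE, hbadP⟩ := he
      push_neg at hbadP
      obtain ⟨f, hf, v, hv1, hv2⟩ := hbadP
      exact Finset.mem_biUnion.mpr ⟨f, hf, Finset.mem_filter.mpr ⟨heE, v, hv1, hv2⟩⟩
    have hfib : ∀ f ∈ N,
        (G.edgeFinset.filter (fun e => ∃ v, v ∈ e ∧ v ∈ f)).card ≤ 2 * d - 1 := by
      intro f
      induction f using Sym2.ind with
      | _ u w =>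
      intro hf
      have hadj : G.Adj u (w) := by
        have := hNm.1 hf
        rwa [SimpleGraph.mem_edgeSet] at this
      have hsub : G.edgeFinset.filter (fun e => ∃ v, v ∈ e ∧ v ∈ s(u, w)) ⊆
          G.incidenceFinset u ∪ G.incidenceFinset w := by
        intro e he
        rw [Finset.mem_filter] at he
        obtain ⟨heE, v, hv1, hv2⟩ := he
        rw [Sym2.mem_iff] at hv2
        rcases hv2 with rfl | rfl
        · exact Finset.mem_union_left _ (by
            rw [SimpleGraph.mem_incidenceFinset]
            exact ⟨SimpleGraph.mem_edgeFinset.mp heE, hv1⟩)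
        · exact Finset.mem_union_right _ (by
            rw [SimpleGraph.mem_incidenceFinset]
            exact ⟨SimpleGraph.mem_edgeFinset.mp heE, hv1⟩)
      have hcu : (G.incidenceFinset u).card = d := by
        rw [SimpleGraph.card_incidenceFinset_eq_degree]; exact hreg u
      have hcw : (G.incidenceFinset w).card = d := by
        rw [SimpleGraph.card_incidenceFinset_eq_degree]; exact hreg w
      have hinter : 1 ≤ (G.incidenceFinset u ∩ G.incidenceFinset w).card := by
        rw [Finset.one_le_card]
        refine ⟨s(u, w), Finset.mem_inter.mpr ⟨?_, ?_⟩⟩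
        · rw [SimpleGraph.mem_incidenceFinset]
          exact ⟨hadj, by simp⟩
        · rw [SimpleGraph.mem_incidenceFinset]
          exact ⟨hadj, by simp⟩
      have hunion := Finset.card_union_add_card_inter (G.incidenceFinset u)
        (G.incidenceFinset w)
      have := Finset.card_le_card hsub
      omega
    have hbadcard : bad.card ≤ j * (2 * d - 1) := by
      calc bad.card ≤ (N.biUnion (fun f =>
            G.edgeFinset.filter (fun e => ∃ v, v ∈ e ∧ v ∈ f))).card :=
          Finset.card_le_card hbadsub
        _ ≤ ∑ f ∈ N, (G.edgeFinset.filter (fun e => ∃ v, v ∈ e ∧ v ∈ f)).card :=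
          Finset.card_biUnion_le
        _ ≤ ∑ _f ∈ N, (2 * d - 1) := Finset.sum_le_sum hfib
        _ = j * (2 * d - 1) := by rw [Finset.sum_const, hNc, smul_eq_mul]
    have hsplit2 : (ext N).card + bad.card = G.edgeFinset.card := hsplit
    omega
  -- assemble
  calc S.card * (G.edgeFinset.card - j * (2 * d - 1))
      = ∑ _N ∈ S, (G.edgeFinset.card - j * (2 * d - 1)) := by
        rw [Finset.sum_const, smul_eq_mul]
    _ ≤ ∑ N ∈ S, (ext N).card := Finset.sum_le_sum hlow
    _ = ∑ M ∈ T, M.card := hkey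
    _ = ∑ _M ∈ T, (j + 1) := by
        apply Finset.sum_congr rfl
        intro M hM
        rw [hT, Finset.mem_filter] at hM
        exact hM.2.2
    _ = (j + 1) * T.card := by rw [Finset.sum_const, smul_eq_mul, mul_comm]

lemma exp_le_key (k : ℕ) (hk : 1 ≤ k) :
    Real.exp 1 * (k:ℝ)^(k+1) ≤ ((k:ℝ)+1)^(k+1) := by
  have hkR : (1:ℝ) ≤ (k:ℝ) := by exact_mod_cast hk
  have hkp : (0:ℝ) < (k:ℝ) := by linarith
  have hexp : Real.exp (1/((k:ℝ)+1)) ≤ 1 + 1/(k:ℝ) := by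
    have h2 : (0:ℝ) < 1 - 1/((k:ℝ)+1) := by
      rw [sub_pos, div_lt_one (by linarith)]; linarith
    have h3 : Real.exp (1/((k:ℝ)+1)) ≤ 1/(1 - 1/((k:ℝ)+1)) := by
      rw [le_div_iff₀ h2]
      calc Real.exp (1/((k:ℝ)+1)) * (1 - 1/((k:ℝ)+1))
          ≤ Real.exp (1/((k:ℝ)+1)) * Real.exp (-(1/((k:ℝ)+1))) := by
            apply mul_le_mul_of_nonneg_left _ (Real.exp_pos _).le
            linarith [Real.add_one_le_exp (-(1/((k:ℝ)+1)))]
        _ = 1 := by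
            rw [← Real.exp_add]
            norm_num
    refine h3.trans (le_of_eq ?_)
    rw [div_eq_iff (by linarith : (1:ℝ) - 1/((k:ℝ)+1) ≠ 0)]
    field_simp
    ring
  have h4 : Real.exp 1 = Real.exp (1/((k:ℝ)+1)) ^ (k+1) := by
    rw [← Real.exp_nat_mul]
    congr 1
    field_simp
    norm_num
  have h5 : Real.exp (1/((k:ℝ)+1)) ^ (k+1) ≤ (1 + 1/(k:ℝ)) ^ (k+1) :=
    pow_le_pow_left₀ (Real.exp_pos _).le hexp _
  have h6 : ((1 + 1/(k:ℝ)) * k) ^ (k+1) = ((k:ℝ)+1)^(k+1) := by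
    congr 1
    field_simp
  calc Real.exp 1 * (k:ℝ)^(k+1) ≤ (1 + 1/(k:ℝ))^(k+1) * (k:ℝ)^(k+1) := by
        rw [h4]
        exact mul_le_mul_of_nonneg_right h5 (pow_nonneg hkp.le _)
    _ = ((1 + 1/(k:ℝ)) * k) ^ (k+1) := (mul_pow _ _ _).symm
    _ = ((k:ℝ)+1)^(k+1) := h6

lemma fact_le_real (k : ℕ) (hk : 1 ≤ k) :
    (k.factorial : ℝ) * (Real.exp 1)^k ≤ Real.exp 1 * k * (k:ℝ)^k := by
  induction k with
  | zero => omega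
  | succ k ih =>
    rcases Nat.eq_zero_or_pos k with rfl | hkpos
    · norm_num
    · have ih' := ih hkpos
      have key := exp_le_key k hkpos
      have hkR : (1:ℝ) ≤ (k:ℝ) := by exact_mod_cast hkpos
      have hep : (0:ℝ) < Real.exp 1 := Real.exp_pos 1
      have hcast : (((k+1).factorial : ℕ) : ℝ) = ((k:ℝ)+1) * (k.factorial : ℝ) := by
        rw [Nat.factorial_succ]; push_cast; ring
      have hpowpos : (0:ℝ) < Real.exp 1 ^ k := pow_pos hep k
      have hfpos : (0:ℝ) < (k.factorial : ℝ) := by positivity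
      push_cast
      rw [hcast]
      calc ((k:ℝ)+1) * (k.factorial:ℝ) * Real.exp 1 ^ (k+1)
          = (((k.factorial:ℝ)) * Real.exp 1 ^ k) * (((k:ℝ)+1) * Real.exp 1) := by
            rw [pow_succ]; ring
        _ ≤ (Real.exp 1 * k * (k:ℝ)^k) * (((k:ℝ)+1) * Real.exp 1) := by
            apply mul_le_mul_of_nonneg_right ih'
            positivity
        _ = (Real.exp 1 * (k:ℝ)^(k+1)) * (((k:ℝ)+1) * Real.exp 1) := by
            rw [pow_succ]; ring
        _ ≤ (((k:ℝ)+1)^(k+1)) * (((k:ℝ)+1) * Real.exp 1) := by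
            apply mul_le_mul_of_nonneg_right key
            positivity
        _ = Real.exp 1 * ((k:ℝ)+1) * ((k:ℝ)+1)^(k+1) := by ring

lemma prod_one_sub_ge (n k : ℕ) (hk : 2 * k < n) :
    Real.exp (-(2 * (k:ℝ)^2 / n)) ≤ ∏ i ∈ range k, (1 - 2 * (i:ℝ) / n) := by
  have hn : (0:ℝ) < n := by
    have : 0 < n := by omega
    exact_mod_cast this
  set F : ℝ → ℝ := fun a => -a - (1 - a) * Real.log (1 - a) with hF
  have hstep : ∀ a b : ℝ, 0 ≤ a → a ≤ b → b < 1 → F b - F a ≤ (b - a) * Real.log (1 - a) := by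
    intro a b ha hab hb
    have h1a : 0 < 1 - a := by linarith
    have h1b : 0 < 1 - b := by linarith
    have hlog := Real.log_le_sub_one_of_pos (x := (1-a)/(1-b)) (by positivity)
    rw [Real.log_div (by linarith) (by linarith)] at hlog
    have h2 := mul_le_mul_of_nonneg_left hlog h1b.le
    have h3 : (1-b) * ((1-a)/(1-b) - 1) = (1-a) - (1-b) := by
      field_simp
    rw [h3] at h2
    simp only [hF]
    nlinarith [h2]
  have hmain : ∀ j : ℕ, j ≤ k →
      (n:ℝ)/2 * F (2*(j:ℝ)/n) ≤ ∑ i ∈ range j, Real.log (1 - 2*(i:ℝ)/n) := by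
    intro j
    induction j with
    | zero => intro _; simp [hF]
    | succ j ih =>
      intro hj
      have ih' := ih (by omega)
      rw [Finset.sum_range_succ]
      have ha : (0:ℝ) ≤ 2*(j:ℝ)/n := by positivity
      have hab : 2*(j:ℝ)/n ≤ 2*((j:ℝ)+1)/n := by
        gcongr
        linarith
      have hb : 2*((j:ℝ)+1)/n < 1 := by
        rw [div_lt_one hn]
        have : 2*(j+1) < n := by omega
        have := (Nat.cast_lt (α := ℝ)).mpr this
        push_cast at this
        linarith
      have hs := hstep (2*(j:ℝ)/n) (2*((j:ℝ)+1)/n) ha hab hb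
      have hdiff : 2*((j:ℝ)+1)/n - 2*(j:ℝ)/n = 2/n := by
        field_simp
        ring
      rw [hdiff] at hs
      -- multiply hs by n/2
      have hmul := mul_le_mul_of_nonneg_left hs (by positivity : (0:ℝ) ≤ (n:ℝ)/2)
      have hone : (n:ℝ)/2 * (2/n) = 1 := by
        field_simp
      have hsimp : (n:ℝ)/2 * (2/n * Real.log (1 - 2*(j:ℝ)/n)) = Real.log (1 - 2*(j:ℝ)/n) := by
        rw [← mul_assoc, hone, one_mul]
      rw [hsimp, mul_sub] at hmul
      push_cast
      linarith
  have hF2 : -(2*(k:ℝ)^2/n) ≤ (n:ℝ)/2 * F (2*(k:ℝ)/n) := by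
    have ha0 : (0:ℝ) ≤ 2*(k:ℝ)/n := by positivity
    have ha1 : 2*(k:ℝ)/n < 1 := by
      rw [div_lt_one hn]
      have := (Nat.cast_lt (α := ℝ)).mpr hk
      push_cast at this
      linarith
    have hl : Real.log (1 - 2*(k:ℝ)/n) ≤ -(2*(k:ℝ)/n) := by
      have := Real.log_le_sub_one_of_pos (x := 1 - 2*(k:ℝ)/n) (by linarith)
      linarith
    have hFlow : -((2*(k:ℝ)/n)^2) ≤ F (2*(k:ℝ)/n) := by
      simp only [hF]
      nlinarith [mul_le_mul_of_nonneg_left hl (by linarith : (0:ℝ) ≤ 1 - 2*(k:ℝ)/n)]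
    have heq : (n:ℝ)/2 * (-((2*(k:ℝ)/n)^2)) = -(2*(k:ℝ)^2/n) := by
      field_simp
    calc -(2*(k:ℝ)^2/n) = (n:ℝ)/2 * (-((2*(k:ℝ)/n)^2)) := heq.symm
      _ ≤ (n:ℝ)/2 * F (2*(k:ℝ)/n) := by
          apply mul_le_mul_of_nonneg_left hFlow (by positivity)
  have hposall : ∀ i ∈ range k, (0:ℝ) < 1 - 2*(i:ℝ)/n := by
    intro i hi
    rw [Finset.mem_range] at hi
    rw [sub_pos, div_lt_one hn]
    have : 2 * i < n := by omega
    have := (Nat.cast_lt (α := ℝ)).mpr this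
    push_cast at this
    linarith
  calc Real.exp (-(2*(k:ℝ)^2/n)) ≤ Real.exp (∑ i ∈ range k, Real.log (1 - 2*(i:ℝ)/n)) :=
        Real.exp_le_exp.mpr ((hF2.trans (hmain k le_rfl)))
    _ = ∏ i ∈ range k, Real.exp (Real.log (1 - 2*(i:ℝ)/n)) := Real.exp_sum _ _
    _ = ∏ i ∈ range k, (1 - 2*(i:ℝ)/n) := by
        apply Finset.prod_congr rfl
        intro i hi
        exact Real.exp_log (hposall i hi)

lemma prod_le_fact_mul {V : Type*} [Fintype V] [DecidableEq V] (G : SimpleGraph V)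
    [DecidableRel G.Adj] (d : ℕ) (hreg : G.IsRegularOfDegree d) (k : ℕ) :
    ∏ i ∈ range k, (G.edgeFinset.card - i * (2 * d - 1)) ≤ k.factorial * mcount G k := by
  classical
  induction k with
  | zero =>
    simp only [Finset.range_zero, Finset.prod_empty, Nat.factorial_zero, one_mul]
    rw [mcount_eq]
    apply Finset.card_pos.mpr
    refine ⟨∅, Finset.mem_filter.mpr ⟨Finset.mem_univ _, ⟨?_, ?_⟩, by simp⟩⟩
    · simp
    · simp
  | succ k ih =>
    rw [Finset.prod_range_succ, Nat.factorial_succ]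
    calc (∏ i ∈ range k, (G.edgeFinset.card - i * (2 * d - 1))) *
          (G.edgeFinset.card - k * (2 * d - 1))
        ≤ (k.factorial * mcount G k) * (G.edgeFinset.card - k * (2 * d - 1)) :=
          Nat.mul_le_mul_right _ ih
      _ = k.factorial * (mcount G k * (G.edgeFinset.card - k * (2 * d - 1))) := by ring
      _ ≤ k.factorial * ((k + 1) * mcount G (k + 1)) :=
          Nat.mul_le_mul_left _ (step_count G d k hreg)
      _ = (k + 1) * k.factorial * mcount G (k + 1) := by ring

/-- Let `G` be a bipartite `d`-regular graph (`d ≥ 2`) with `n` vertices on each side and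
let `k < n/2`. Then the number of matchings of size `k` in `G` is at least
`(end/k)^k · (1/(2e))^{4k²/n} · 1/(2πk)`. -/
theorem stmt13 {V : Type*} [Fintype V] [DecidableEq V] (G : SimpleGraph V)
    [DecidableRel G.Adj] (A B : Finset V) (n d k : ℕ)
    (hcover : ∀ v, v ∈ A ∨ v ∈ B) (hdisj : Disjoint A B)
    (hA : A.card = n) (hB : B.card = n)
    (hbip : ∀ u v, G.Adj u v → (u ∈ A ∧ v ∈ B) ∨ (u ∈ B ∧ v ∈ A))
    (hreg : G.IsRegularOfDegree d) (hd : 2 ≤ d) (hk : 2 * k < n) :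
    (Real.exp 1 * n * d / k) ^ k * (1 / (2 * Real.exp 1)) ^ ((4 * k ^ 2 : ℝ) / n)
        * (1 / (2 * Real.pi * k)) ≤
      (Nat.card {M : Finset (Sym2 V) // IsMatchingSet G M ∧ M.card = k} : ℝ) := by
  have hmeq : (Nat.card {M : Finset (Sym2 V) // IsMatchingSet G M ∧ M.card = k}) =
      mcount G k := rfl
  rw [hmeq]
  rcases Nat.eq_zero_or_pos k with rfl | hk1
  · norm_num
  -- k ≥ 1, so n ≥ 3
  have hn3 : 3 ≤ n := by omega
  have hnR : (0:ℝ) < n := by exact_mod_cast (by omega : 0 < n)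
  have hkR : (0:ℝ) < k := by exact_mod_cast hk1
  have hdR : (0:ℝ) < d := by exact_mod_cast (by omega : 0 < d)
  have hep : (0:ℝ) < Real.exp 1 := Real.exp_pos 1
  -- edge count
  have hV : Fintype.card V = 2 * n := by
    have huniv : A ∪ B = Finset.univ :=
      Finset.eq_univ_of_forall (fun v => Finset.mem_union.mpr (hcover v))
    rw [← Finset.card_univ, ← huniv, Finset.card_union_of_disjoint hdisj, hA, hB]
    omega
  have hE : G.edgeFinset.card = n * d := by
    have h1 := SimpleGraph.sum_degrees_eq_twice_card_edges G
    have h2 : ∑ v : V, G.degree v = 2 * n * d := by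
      rw [Finset.sum_congr rfl (fun v _ => hreg v), Finset.sum_const, Finset.card_univ, hV,
        smul_eq_mul]
    have h3 : 2 * G.edgeFinset.card = 2 * n * d := h1.symm.trans h2
    have h4 : 2 * G.edgeFinset.card = 2 * (n * d) := by rw [h3, mul_assoc]
    omega
  -- combinatorial bound
  have hcomb := prod_le_fact_mul G d hreg k
  rw [hE] at hcomb
  -- cast each factor
  have hfac : ∀ i, i < k → i * (2 * d - 1) ≤ n * d := by
    intro i hi
    calc i * (2 * d - 1) ≤ i * (2 * d) := Nat.mul_le_mul_left _ (by omega)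
      _ = 2 * i * d := by ring
      _ ≤ n * d := Nat.mul_le_mul_right _ (by omega)
  -- real product lower bound
  have hprodR : ((n:ℝ) * d) ^ k * Real.exp (-(2 * (k:ℝ)^2 / n)) ≤
      ((∏ i ∈ range k, (n * d - i * (2 * d - 1)) : ℕ) : ℝ) := by
    rw [Nat.cast_prod]
    calc ((n:ℝ) * d) ^ k * Real.exp (-(2 * (k:ℝ)^2 / n))
        ≤ ((n:ℝ) * d) ^ k * ∏ i ∈ range k, (1 - 2 * (i:ℝ) / n) := by
          apply mul_le_mul_of_nonneg_left (prod_one_sub_ge n k hk) (by positivity)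
      _ = ∏ i ∈ range k, ((n:ℝ) * d * (1 - 2 * (i:ℝ) / n)) := by
          rw [Finset.prod_mul_distrib, Finset.prod_const, Finset.card_range]
      _ ≤ ∏ i ∈ range k, (((n * d - i * (2 * d - 1) : ℕ) : ℝ)) := by
          apply Finset.prod_le_prod
          · intro i hi
            rw [Finset.mem_range] at hi
            have h2i : 2 * (i:ℝ) / n < 1 := by
              rw [div_lt_one hnR]
              have : 2 * i < n := by omega
              exact_mod_cast this
            have h2i' : (0:ℝ) ≤ 1 - 2 * (i:ℝ) / n := by linarith
            positivity
          · intro i hi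
            rw [Finset.mem_range] at hi
            rw [Nat.cast_sub (hfac i hi)]
            push_cast
            have h1 : (i:ℝ) * (2 * d - 1) ≤ 2 * i * d := by
              have : (1:ℝ) ≤ (d:ℝ) := by exact_mod_cast (by omega : 1 ≤ d)
              nlinarith [Nat.cast_nonneg (α := ℝ) i]
            have h2 : (n:ℝ) * d * (1 - 2 * (i:ℝ) / n) = n * d - 2 * i * d := by
              field_simp
            have h3 : ((2 * d - 1 : ℕ) : ℝ) = 2 * (d:ℝ) - 1 := by
              have h4 : (1:ℕ) ≤ 2 * d := by omega
              push_cast [Nat.cast_sub h4]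
              ring
            rw [h3]
            linarith
  -- factorial bound
  have hfact := fact_le_real k hk1
  have hkfpos : (0:ℝ) < (k.factorial : ℝ) := by
    exact_mod_cast k.factorial_pos
  have hQle : ((n:ℝ) * d) ^ k * Real.exp (-(2 * (k:ℝ)^2 / n)) ≤
      (k.factorial : ℝ) * (mcount G k : ℝ) := by
    refine hprodR.trans ?_
    exact_mod_cast hcomb
  -- rpow bound
  set r : ℝ := (4 * (k:ℝ) ^ 2) / n with hr
  have hr0 : (0:ℝ) ≤ r := by positivity
  have hrpow : (1/(2*Real.exp 1)) ^ r ≤ Real.exp (-r) := by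
    have h1 : (1/(2*Real.exp 1)) ≤ Real.exp (-1) := by
      rw [Real.exp_neg]
      rw [← one_div]
      apply one_div_le_one_div_of_le hep
      linarith
    calc (1/(2*Real.exp 1)) ^ r ≤ (Real.exp (-1)) ^ r :=
          Real.rpow_le_rpow (by positivity) h1 hr0
      _ = Real.exp (-r) := by
          rw [Real.rpow_def_of_pos (Real.exp_pos _), Real.log_exp]
          ring_nf
  have hfinal : (1/(2*Real.exp 1)) ^ r * (Real.exp 1/(2*Real.pi)) ≤
      Real.exp (-(2 * (k:ℝ)^2 / n)) := by
    have h6 : Real.exp (-r) ≤ Real.exp (-(2 * (k:ℝ)^2 / n)) := by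
      apply Real.exp_le_exp.mpr
      rw [hr]
      have : (0:ℝ) ≤ 2 * (k:ℝ)^2 / n := by positivity
      have heq : (4 * (k:ℝ)^2) / n = 2 * (k:ℝ)^2 / n + 2 * (k:ℝ)^2 / n := by ring
      linarith [heq]
    have h7 : Real.exp 1/(2*Real.pi) ≤ 1 := by
      rw [div_le_one (by positivity)]
      have h8 := Real.exp_one_lt_d9
      have h9 := Real.pi_gt_three
      linarith
    calc (1/(2*Real.exp 1)) ^ r * (Real.exp 1/(2*Real.pi))
        ≤ Real.exp (-r) * 1 := by
          apply mul_le_mul hrpow h7 (by positivity) (Real.exp_pos _).le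
      _ = Real.exp (-r) := by ring
      _ ≤ Real.exp (-(2 * (k:ℝ)^2 / n)) := h6
  -- assemble
  have hA : (Real.exp 1 * n * d / k) ^ k * (1 / (2 * Real.exp 1)) ^ r
        * (1 / (2 * Real.pi * k)) * (k.factorial : ℝ) ≤
      ((n:ℝ) * d) ^ k * Real.exp (-(2 * (k:ℝ)^2 / n)) := by
    have hfact' : (k.factorial : ℝ) ≤
        Real.exp 1 * k * (k:ℝ)^k / (Real.exp 1)^k := by
      rw [le_div_iff₀ (pow_pos hep k)]
      exact hfact
    calc (Real.exp 1 * n * d / k) ^ k * (1 / (2 * Real.exp 1)) ^ r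
          * (1 / (2 * Real.pi * k)) * (k.factorial : ℝ)
        ≤ (Real.exp 1 * n * d / k) ^ k * (1 / (2 * Real.exp 1)) ^ r
          * (1 / (2 * Real.pi * k)) * (Real.exp 1 * k * (k:ℝ)^k / (Real.exp 1)^k) := by
          apply mul_le_mul_of_nonneg_left hfact'
          positivity
      _ = ((n:ℝ) * d) ^ k * ((1 / (2 * Real.exp 1)) ^ r * (Real.exp 1/(2*Real.pi))) := by
          rw [div_pow, mul_pow, mul_pow]
          field_simp
          ring
      _ ≤ ((n:ℝ) * d) ^ k * Real.exp (-(2 * (k:ℝ)^2 / n)) := by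
          apply mul_le_mul_of_nonneg_left hfinal
          positivity
  -- conclude
  have hTm := hA.trans hQle
  rw [mul_comm (k.factorial : ℝ) ((mcount G k : ℕ) : ℝ)] at hTm
  exact le_of_mul_le_mul_right hTm hkfpos
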